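/- For the quadratic q(t) = m(−t g) = φ(x) − t‖g‖² + (t²/2)⟨Hg, g⟩ with g ≠ 0, the minimum of q over {t ≥ 0 : t‖g‖ ≤ Δ} satisfies m(0) − min q ≥ (1/2)‖g‖ min{Δ, ‖g‖/‖H‖}. -/

import Mathlib

open scoped RealInnerProductSpace

/-- Cauchy point decrease bound.  For the quadratic
`q(t) = m(−t g) = φx − t‖g‖² + (t²/2)⟨Hg, g⟩` with `g ≠ 0`, the minimum of `q` over
`{t ≥ 0 : t‖g‖ ≤ Δ}` satisfies `m 0 − min q ≥ (1/2)‖g‖ min{Δ, ‖g‖/‖H‖}`. -/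
theorem stmt_6
    {V : Type*} [NormedAddCommGroup V] [InnerProductSpace ℝ V]
    (φx : ℝ) (g : V) (hg : g ≠ 0) (H : V →L[ℝ] V)
    (hsym : ∀ u v : V, ⟪H u, v⟫ = ⟪u, H v⟫)
    (Δ : ℝ) (hΔ : 0 < Δ)
    (m : V → ℝ) (hm : ∀ η, m η = φx + ⟪g, η⟫ + (1/2) * ⟪H η, η⟫) :
    (1/2) * ‖g‖ * min Δ (‖g‖ / ‖H‖) ≤
      m 0 - sInf ((fun t : ℝ => m (-(t • g))) '' {t : ℝ | 0 ≤ t ∧ t * ‖g‖ ≤ Δ}) := by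
  have hgn : (0:ℝ) < ‖g‖ := norm_pos_iff.mpr hg
  set a : ℝ := ⟪H g, g⟫ with ha
  have key : ∀ t : ℝ, m (-(t • g)) = φx - t * ‖g‖^2 + t^2/2 * a := by
    intro t
    rw [hm]
    simp only [map_neg, map_smul, inner_neg_neg, inner_neg_left, inner_neg_right,
      real_inner_smul_left, real_inner_smul_right, real_inner_self_eq_norm_sq, ha]
    ring
  have hm0 : m 0 = φx := by rw [hm]; simp
  have hfun : (fun t : ℝ => m (-(t • g))) = fun t : ℝ => φx - t * ‖g‖^2 + t^2/2 * a :=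
    funext key
  have hSet : {t : ℝ | 0 ≤ t ∧ t * ‖g‖ ≤ Δ} = Set.Icc 0 (Δ / ‖g‖) := by
    ext t
    simp only [Set.mem_setOf_eq, Set.mem_Icc]
    constructor
    · rintro ⟨h1, h2⟩; exact ⟨h1, (le_div_iff₀ hgn).mpr h2⟩
    · rintro ⟨h1, h2⟩; exact ⟨h1, (le_div_iff₀ hgn).mp h2⟩
  have hbdd : BddBelow ((fun t : ℝ => m (-(t • g))) '' {t : ℝ | 0 ≤ t ∧ t * ‖g‖ ≤ Δ}) := by
    rw [hfun, hSet]
    exact (isCompact_Icc.image (by fun_prop)).bddBelow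
  have ha_le : a ≤ ‖H‖ * ‖g‖^2 := by
    calc a ≤ ‖H g‖ * ‖g‖ := real_inner_le_norm _ _
      _ ≤ (‖H‖ * ‖g‖) * ‖g‖ := by gcongr; exact H.le_opNorm g
      _ = ‖H‖ * ‖g‖^2 := by ring
  -- choose the trial point t
  suffices h : ∃ t : ℝ, (0 ≤ t ∧ t * ‖g‖ ≤ Δ) ∧
      (1/2) * ‖g‖ * min Δ (‖g‖ / ‖H‖) ≤ m 0 - m (-(t • g)) by
    obtain ⟨t, htS, hbound⟩ := h
    have hle : sInf ((fun t : ℝ => m (-(t • g))) '' {t : ℝ | 0 ≤ t ∧ t * ‖g‖ ≤ Δ}) ≤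
        m (-(t • g)) := csInf_le hbdd ⟨t, htS, rfl⟩
    linarith
  by_cases hcase : a * Δ ≤ ‖g‖^2 * ‖g‖
  · refine ⟨Δ / ‖g‖, ⟨le_of_lt (div_pos hΔ hgn), by rw [div_mul_cancel₀ _ hgn.ne']⟩, ?_⟩
    rw [key, hm0]
    have h1 : (Δ / ‖g‖)^2 / 2 * a ≤ Δ * ‖g‖ / 2 := by
      rw [div_pow, div_div, div_mul_eq_mul_div,
        div_le_div_iff₀ (by positivity) (by norm_num : (0:ℝ) < 2)]
      nlinarith [hΔ.le, hgn.le]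
    have h2 : Δ / ‖g‖ * ‖g‖^2 = Δ * ‖g‖ := by field_simp
    have h3 : min Δ (‖g‖ / ‖H‖) ≤ Δ := min_le_left _ _
    nlinarith [hgn.le]
  · push_neg at hcase
    have hapos : 0 < a := by nlinarith [hgn, hΔ]
    have hHpos : 0 < ‖H‖ := by nlinarith [hgn]
    refine ⟨‖g‖^2 / a, ⟨by positivity, ?_⟩, ?_⟩
    · rw [div_mul_eq_mul_div, div_le_iff₀ hapos]
      nlinarith
    · rw [key, hm0]
      have hdec : φx - (φx - ‖g‖^2 / a * ‖g‖^2 + (‖g‖^2 / a)^2/2 * a) = ‖g‖^4 / (2 * a) := by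
        field_simp; ring
      rw [hdec]
      have h4 : ‖g‖^4 / (2 * ‖H‖ * ‖g‖^2) ≤ ‖g‖^4 / (2 * a) := by
        apply div_le_div_of_nonneg_left (by positivity) (by positivity)
        nlinarith
      have h5 : ‖g‖^4 / (2 * ‖H‖ * ‖g‖^2) = (1/2) * ‖g‖ * (‖g‖ / ‖H‖) := by
        field_simp
      have h6 : min Δ (‖g‖ / ‖H‖) ≤ ‖g‖ / ‖H‖ := min_le_right _ _
      nlinarith [hgn.le]
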